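/- Let a, r, k_min, k_max be positive reals with k_min < k_max, and let x₊ denote the larger of the two positive roots of the quadratic (a/k_max)·X² − (r/k_min + a)·X + r. If y : [0, b) → ℝ is a C¹ function satisfying y′(t) = (a/k_max)·y(t)³ − (r/k_min + a)·y(t)² + r·y(t) for all t ∈ [0, b) with y(0) > x₊, then y blows up in finite time: there is no such solution defined on all of [0, ∞), and on the maximal interval of existence [0, T*) one has T* < ∞ and y(t) → +∞ as t → T*⁻. -/

import Mathlib

open Set Filter

lemma cubic_fac {c s r xp xm : ℝ} (hc : c ≠ 0) (hroot : c*xp^2 - s*xp + r = 0)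
    (hxm : xm = s/c - xp) : ∀ x : ℝ, c*x^2 - s*x + r = c*(x-xp)*(x-xm) := by
  intro x
  have h1 : c * xm = s - c*xp := by rw [hxm]; field_simp
  linear_combination (x - xp) * h1 + hroot

lemma cubic_pos {c s r xp xm : ℝ} (hc : 0 < c) (hxp : 0 < xp) (hxm : xm ≤ xp)
    (hfac : ∀ x : ℝ, c*x^2 - s*x + r = c*(x-xp)*(x-xm)) :
    ∀ x : ℝ, xp < x → 0 < c*x^3 - s*x^2 + r*x := by
  intro x hx
  have h := hfac x
  have h1 : 0 < c*(x-xp)*(x-xm) := by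
    have := mul_pos hc (sub_pos.2 hx)
    nlinarith
  have h2 := mul_pos (hxp.trans hx) h1
  nlinarith [h]

lemma cubic_lower {c s r xp xm y0 : ℝ} (hc : 0 < c) (hxp : 0 < xp) (hxm : xm ≤ xp)
    (hfac : ∀ x : ℝ, c*x^2 - s*x + r = c*(x-xp)*(x-xm)) (hy0 : xp < y0) :
    ∀ x : ℝ, y0 ≤ x → c*y0*((y0-xp)*(y0-xm)) ≤ c*x^3 - s*x^2 + r*x := by
  intro x hx
  have e1 : c*x^3 - s*x^2 + r*x = x*(c*(x-xp)*(x-xm)) := by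
    linear_combination x * hfac x
  rw [e1]
  have h0 : 0 < y0 := hxp.trans hy0
  have h2 : 0 < y0 - xp := by linarith
  have h1 : 0 < y0 - xm := by linarith
  have A : c*(y0-xp) ≤ c*(x-xp) := by
    have : y0 - xp ≤ x - xp := by linarith
    exact mul_le_mul_of_nonneg_left this hc.le
  have step1 : c*(y0-xp)*(y0-xm) ≤ c*(x-xp)*(x-xm) :=
    mul_le_mul A (by linarith) h1.le (le_trans (mul_pos hc h2).le A)
  have step2 : y0 * (c*(y0-xp)*(y0-xm)) ≤ x * (c*(x-xp)*(x-xm)) :=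
    mul_le_mul hx step1 (by positivity) (by linarith)
  calc c*y0*((y0-xp)*(y0-xm)) = y0 * (c*(y0-xp)*(y0-xm)) := by ring
    _ ≤ _ := step2

lemma sol_mono {c s r xp xm T : ℝ} {y : ℝ → ℝ} (hc : 0 < c) (hxp : 0 < xp) (hxm : xm ≤ xp)
    (hfac : ∀ x : ℝ, c*x^2 - s*x + r = c*(x-xp)*(x-xm)) (hy0 : xp < y 0)
    (hsol : ∀ t ∈ Ico 0 T, HasDerivWithinAt y (c * y t ^ 3 - s * y t ^ 2 + r * y t) (Ico 0 T) t) :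
    (∀ t ∈ Ico (0:ℝ) T, xp < y t) ∧ StrictMonoOn y (Ico 0 T) := by
  have hcont : ContinuousOn y (Ico 0 T) := fun t ht => (hsol t ht).continuousWithinAt
  have hDat : ∀ t ∈ Ioo (0:ℝ) T, HasDerivAt y (c * y t ^ 3 - s * y t ^ 2 + r * y t) t :=
    fun t ht => (hsol t ⟨ht.1.le, ht.2⟩).hasDerivAt (Ico_mem_nhds ht.1 ht.2)
  have claimA : ∀ t ∈ Ico (0:ℝ) T, xp < y t := by
    intro t ht
    by_contra hle
    push_neg at hle
    have ht0 : 0 < t := by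
      rcases eq_or_lt_of_le ht.1 with h | h
      · exact absurd hle (by rw [← h]; exact not_le.2 hy0)
      · exact h
    set K : Set ℝ := Icc 0 t ∩ y ⁻¹' (Iic xp) with hK
    have hsub : Icc 0 t ⊆ Ico 0 T := fun u hu => ⟨hu.1, lt_of_le_of_lt hu.2 ht.2⟩
    have hKcl : IsClosed K :=
      (hcont.mono hsub).preimage_isClosed_of_isClosed isClosed_Icc isClosed_Iic
    have hKcp : IsCompact K := isCompact_Icc.of_isClosed_subset hKcl inter_subset_left
    have hKne : K.Nonempty := ⟨t, ⟨ht.1, le_refl t⟩, hle⟩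
    set t₁ := sInf K with ht₁
    have ht₁K : t₁ ∈ K := hKcp.sInf_mem hKne
    have ht₁0 : 0 < t₁ := by
      rcases eq_or_lt_of_le ht₁K.1.1 with h | h
      · exact absurd ht₁K.2 (by simp only [mem_preimage, mem_Iic, ← h]; exact not_le.2 hy0)
      · exact h
    have hbefore : ∀ u ∈ Ico (0:ℝ) t₁, xp < y u := by
      intro u hu
      by_contra hu'
      push_neg at hu'
      have : u ∈ K := ⟨⟨hu.1, hu.2.le.trans ht₁K.1.2⟩, hu'⟩
      exact absurd (csInf_le hKcp.bddBelow this) (not_le.2 hu.2)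
    have hmono : StrictMonoOn y (Icc 0 t₁) := by
      apply strictMonoOn_of_deriv_pos (convex_Icc 0 t₁)
        (hcont.mono (fun u hu => ⟨hu.1, lt_of_le_of_lt (hu.2.trans ht₁K.1.2) ht.2⟩))
      intro u hu
      rw [interior_Icc] at hu
      have huT : u ∈ Ioo 0 T := ⟨hu.1, by
        have h1 : t₁ ≤ t := ht₁K.1.2
        have h2 : t < T := ht.2
        linarith [hu.2]⟩
      rw [(hDat u huT).deriv]
      exact cubic_pos hc hxp hxm hfac _ (hbefore u ⟨hu.1.le, hu.2⟩)
    have := hmono (left_mem_Icc.2 ht₁0.le) (right_mem_Icc.2 ht₁0.le) ht₁0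
    exact absurd ht₁K.2 (not_le.2 (hy0.trans this))
  refine ⟨claimA, ?_⟩
  apply strictMonoOn_of_deriv_pos (convex_Ico 0 T) hcont
  intro u hu
  rw [interior_Ico] at hu
  rw [(hDat u hu).deriv]
  exact cubic_pos hc hxp hxm hfac _ (claimA u ⟨hu.1.le, hu.2⟩)

lemma sol_growth {c s r xp xm T : ℝ} {y : ℝ → ℝ} (hc : 0 < c) (hxp : 0 < xp) (hxm : xm ≤ xp)
    (hfac : ∀ x : ℝ, c*x^2 - s*x + r = c*(x-xp)*(x-xm)) (hy0 : xp < y 0)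
    (hsol : ∀ t ∈ Ico 0 T, HasDerivWithinAt y (c * y t ^ 3 - s * y t ^ 2 + r * y t) (Ico 0 T) t) :
    ∀ t ∈ Ico (0:ℝ) T, y 0 + (c*(y 0)*((y 0-xp)*(y 0-xm))) * t ≤ y t := by
  obtain ⟨hgt, hmono⟩ := sol_mono hc hxp hxm hfac hy0 hsol
  have hcont : ContinuousOn y (Ico 0 T) := fun t ht => (hsol t ht).continuousWithinAt
  have hDat : ∀ t ∈ Ioo (0:ℝ) T, HasDerivAt y (c * y t ^ 3 - s * y t ^ 2 + r * y t) t :=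
    fun t ht => (hsol t ⟨ht.1.le, ht.2⟩).hasDerivAt (Ico_mem_nhds ht.1 ht.2)
  intro t ht
  set δ := c*(y 0)*((y 0-xp)*(y 0-xm)) with hδ
  have hsub : Icc 0 t ⊆ Ico 0 T := fun u hu => ⟨hu.1, lt_of_le_of_lt hu.2 ht.2⟩
  have hDg : ∀ u ∈ Ioo (0:ℝ) t, HasDerivAt (fun u => y u - δ * u)
      ((c * y u ^ 3 - s * y u ^ 2 + r * y u) - δ) u := by
    intro u hu
    have huT : u ∈ Ioo 0 T := ⟨hu.1, lt_trans hu.2 ht.2⟩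
    exact ((hDat u huT).sub ((hasDerivAt_id u).const_mul δ)).congr_deriv (by ring)
  have hmon : MonotoneOn (fun u => y u - δ * u) (Icc 0 t) := by
    apply monotoneOn_of_deriv_nonneg (convex_Icc 0 t)
      ((hcont.mono hsub).sub (Continuous.continuousOn (by continuity)))
    · intro u hu
      rw [interior_Icc] at hu
      exact ((hDg u hu).differentiableAt).differentiableWithinAt
    · intro u hu
      rw [interior_Icc] at hu
      change 0 ≤ deriv (fun u => y u - δ * u) u
      rw [(hDg u hu).deriv]
      have hu' : u ∈ Ico 0 T := ⟨hu.1.le, lt_trans hu.2 ht.2⟩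
      have h0mem : (0:ℝ) ∈ Ico (0:ℝ) T := ⟨le_refl 0, lt_of_le_of_lt ht.1 ht.2⟩
      have hyu : y 0 ≤ y u := hmono.monotoneOn h0mem hu' hu.1.le
      have := cubic_lower hc hxp hxm hfac hy0 (y u) hyu
      linarith
  have h1 : y 0 - δ * 0 ≤ y t - δ * t :=
    hmon (left_mem_Icc.2 ht.1) (right_mem_Icc.2 ht.1) ht.1
  linarith [h1]

lemma no_sol_large_T {c s r xp xm : ℝ} (hc : 0 < c) (hr : 0 < r) (hxp : 0 < xp) (hxm : xm ≤ xp)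
    (hfac : ∀ x : ℝ, c*x^2 - s*x + r = c*(x-xp)*(x-xm)) (y0 : ℝ) (hy0 : xp < y0) :
    ∃ Tb : ℝ, 0 < Tb ∧ ∀ T : ℝ, Tb < T → ∀ y : ℝ → ℝ, y 0 = y0 →
      (∀ t ∈ Ico 0 T, HasDerivWithinAt y (c * y t ^ 3 - s * y t ^ 2 + r * y t) (Ico 0 T) t) →
      False := by
  set δ := c*y0*((y0-xp)*(y0-xm)) with hδdef
  have hδ : 0 < δ := by
    have h0 : 0 < y0 := hxp.trans hy0
    have h2 : 0 < y0 - xp := by linarith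
    have h1 : 0 < y0 - xm := by linarith
    positivity
  set M := max y0 (max 1 ((s+1)/c)) with hMdef
  have hMy0 : y0 ≤ M := le_max_left _ _
  have hM1 : (1:ℝ) ≤ M := le_trans (le_max_left _ _) (le_max_right _ _)
  have hMsc : (s+1)/c ≤ M := le_trans (le_max_right _ _) (le_max_right _ _)
  have hMpos : (0:ℝ) < M := lt_of_lt_of_le one_pos hM1
  have hfM : ∀ x : ℝ, M ≤ x → x^2 ≤ c*x^3 - s*x^2 + r*x := by
    intro x hx
    have hx1 : (1:ℝ) ≤ x := hM1.trans hx
    have hxsc : (s+1)/c ≤ x := hMsc.trans hx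
    have h1 : s + 1 ≤ c * x := by
      rw [div_le_iff₀ hc] at hxsc; linarith
    have h2 : 0 ≤ c*x^2 - (s+1)*x := by nlinarith
    nlinarith
  set T₁ := (M - y0)/δ with hT₁def
  have hT₁ : 0 ≤ T₁ := div_nonneg (by linarith) hδ.le
  refine ⟨T₁ + 1/M, by positivity, ?_⟩
  intro T hT y hy0' hsol
  rw [← hy0'] at hy0 hδdef hMy0 hT₁def
  obtain ⟨hgt, hmono⟩ := sol_mono hc hxp hxm hfac hy0 hsol
  have hgrow := sol_growth hc hxp hxm hfac hy0 hsol
  have hcont : ContinuousOn y (Ico 0 T) := fun t ht => (hsol t ht).continuousWithinAt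
  have hDat : ∀ t ∈ Ioo (0:ℝ) T, HasDerivAt y (c * y t ^ 3 - s * y t ^ 2 + r * y t) t :=
    fun t ht => (hsol t ⟨ht.1.le, ht.2⟩).hasDerivAt (Ico_mem_nhds ht.1 ht.2)
  have hMT : 1/M > 0 := by positivity
  have hT₁T : T₁ < T := by linarith
  have hT₁mem : T₁ ∈ Ico (0:ℝ) T := ⟨hT₁, hT₁T⟩
  have hyT₁ : M ≤ y T₁ := by
    have h1 := hgrow T₁ hT₁mem
    rw [← hδdef] at h1
    have h2 : δ * T₁ = M - y 0 := by
      rw [hT₁def]; field_simp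
    linarith
  set T' := (T₁ + 1/M + T)/2 with hT'def
  have hT'1 : T₁ + 1/M < T' := by linarith
  have hT'2 : T' < T := by linarith
  have hsub : Icc T₁ T' ⊆ Ico 0 T := fun u hu => ⟨hT₁.trans hu.1, lt_of_le_of_lt hu.2 hT'2⟩
  have hyM : ∀ u ∈ Icc T₁ T', M ≤ y u := by
    intro u hu
    exact hyT₁.trans (hmono.monotoneOn hT₁mem (hsub hu) hu.1)
  have hyne : ∀ u ∈ Icc T₁ T', y u ≠ 0 := fun u hu => (lt_of_lt_of_le hMpos (hyM u hu)).ne'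
  -- w := fun t => (y t)⁻¹ + t is antitone on Icc T₁ T'
  have hDw : ∀ u ∈ Ioo T₁ T', HasDerivAt (fun t => (y t)⁻¹ + t)
      (-(c * y u ^ 3 - s * y u ^ 2 + r * y u) / (y u)^2 + 1) u := by
    intro u hu
    have huT : u ∈ Ioo 0 T := ⟨lt_of_le_of_lt hT₁ hu.1, lt_trans hu.2 hT'2⟩
    exact ((hDat u huT).inv (hyne u ⟨hu.1.le, hu.2.le⟩)).add (hasDerivAt_id u)
  have hanti : AntitoneOn (fun t => (y t)⁻¹ + t) (Icc T₁ T') := by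
    have hcnt : ContinuousOn (fun t => (y t)⁻¹ + t) (Icc T₁ T') :=
      ((hcont.mono hsub).inv₀ hyne).add continuous_id.continuousOn
    apply antitoneOn_of_deriv_nonpos (convex_Icc T₁ T') hcnt
    · intro u hu
      rw [interior_Icc] at hu
      exact ((hDw u hu).differentiableAt).differentiableWithinAt
    · intro u hu
      rw [interior_Icc] at hu
      rw [(hDw u hu).deriv]
      have hyu : M ≤ y u := hyM u ⟨hu.1.le, hu.2.le⟩
      have hypos : 0 < y u := lt_of_lt_of_le hMpos hyu
      have hfyu : (y u)^2 ≤ c * y u ^ 3 - s * y u ^ 2 + r * y u := hfM (y u) hyu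
      have : 1 ≤ (c * y u ^ 3 - s * y u ^ 2 + r * y u) / (y u)^2 :=
        (one_le_div (by positivity)).2 hfyu
      have hdiv : -(c * y u ^ 3 - s * y u ^ 2 + r * y u) / (y u)^2
          = -((c * y u ^ 3 - s * y u ^ 2 + r * y u) / (y u)^2) := by ring
      rw [hdiv]; linarith
  have hT₁mem' : T₁ ∈ Icc T₁ T' := left_mem_Icc.2 (by linarith)
  have hT'mem : T' ∈ Icc T₁ T' := right_mem_Icc.2 (by linarith)
  have h1 := hanti hT₁mem' hT'mem (by linarith)
  have hinv1 : (y T₁)⁻¹ ≤ 1/M := by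
    rw [one_div]
    exact inv_anti₀ hMpos hyT₁
  have hinv2 : 0 < (y T')⁻¹ :=
    inv_pos.2 (lt_of_lt_of_le hMpos (hyM T' hT'mem))
  simp only at h1
  linarith


lemma extend_sol {c s r Tstar C : ℝ} {y : ℝ → ℝ} (hTs : 0 < Tstar)
    (hsol : ∀ t ∈ Ico 0 Tstar,
      HasDerivWithinAt y (c * y t ^ 3 - s * y t ^ 2 + r * y t) (Ico 0 Tstar) t)
    (hlow : ∀ t ∈ Ico 0 Tstar, y 0 ≤ y t) (hup : ∀ t ∈ Ico 0 Tstar, y t ≤ C) :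
    ∃ b : ℝ, Tstar < b ∧ ∃ z : ℝ → ℝ, z 0 = y 0 ∧
      (∀ t ∈ Ico 0 b, HasDerivWithinAt z (c * z t ^ 3 - s * z t ^ 2 + r * z t) (Ico 0 b) t) ∧
      ∀ t ∈ Ico (0:ℝ) Tstar, z t = y t := by
  have h0mem : (0:ℝ) ∈ Ico (0:ℝ) Tstar := ⟨le_refl 0, hTs⟩
  set m := y 0 with hmdef
  have hmC : m ≤ C := hup 0 h0mem
  set B := |m| + |C| + 1 with hBdef
  have hB0 : 0 < B := by positivity
  have habs : ∀ x : ℝ, m - 1 ≤ x → x ≤ C + 1 → |x| ≤ B := by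
    intro x h1 h2
    rw [abs_le]
    constructor <;>
      nlinarith [neg_abs_le m, le_abs_self m, neg_abs_le C, le_abs_self C,
        abs_nonneg m, abs_nonneg C]
  set clamp : ℝ → ℝ := fun x => max (min x (C+1)) (m-1) with hclampdef
  have hclJ : ∀ x : ℝ, m - 1 ≤ clamp x ∧ clamp x ≤ C + 1 := fun x =>
    ⟨le_max_right _ _, max_le (min_le_right _ _) (by linarith)⟩
  have hcl_eq : ∀ x : ℝ, m - 1 ≤ x → x ≤ C + 1 → clamp x = x := by
    intro x h1 h2
    rw [hclampdef]
    simp only [min_eq_left h2, max_eq_left h1]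
  have hcl_lip : ∀ u v : ℝ, |clamp u - clamp v| ≤ |u - v| := by
    intro u v
    have h1 : |clamp u - clamp v| ≤ |min u (C+1) - min v (C+1)| :=
      abs_max_sub_max_le_abs _ _ _
    have h2 : |min u (C+1) - min v (C+1)| ≤ max |u - v| |(C+1) - (C+1)| :=
      abs_min_sub_min_le_max _ _ _ _
    simp only [sub_self, abs_zero, max_eq_left (abs_nonneg (u - v))] at h2
    linarith
  set g : ℝ → ℝ := fun x => c * clamp x ^ 3 - s * clamp x ^ 2 + r * clamp x with hgdef
  set K0 := 3* |c| *B^2 + 2* |s| *B + |r| with hK0def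
  have hK0 : 0 ≤ K0 := by positivity
  have hfdiff : ∀ p q : ℝ, |p| ≤ B → |q| ≤ B →
      |(c*p^3 - s*p^2 + r*p) - (c*q^3 - s*q^2 + r*q)| ≤ K0 * |p - q| := by
    intro p q hp hq
    have e : (c*p^3 - s*p^2 + r*p) - (c*q^3 - s*q^2 + r*q)
        = (p - q) * (c*(p^2+p*q+q^2) - s*(p+q) + r) := by ring
    rw [e, abs_mul, mul_comm]
    apply mul_le_mul_of_nonneg_right ?_ (abs_nonneg _)
    have h1 : |p^2 + p*q + q^2| ≤ 3*B^2 := by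
      have e1 := abs_add_le (p^2 + p*q) (q^2)
      have e2 := abs_add_le (p^2 : ℝ) (p*q)
      have e3 : |p*q| ≤ B*B := by
        rw [abs_mul]; exact mul_le_mul hp hq (abs_nonneg q) hB0.le
      have e4 : |p^2| ≤ B^2 := by
        rw [abs_pow]; exact pow_le_pow_left₀ (abs_nonneg p) hp 2
      have e5 : |q^2| ≤ B^2 := by
        rw [abs_pow]; exact pow_le_pow_left₀ (abs_nonneg q) hq 2
      nlinarith
    have h2 : |p + q| ≤ 2*B := le_trans (abs_add_le p q) (by linarith)
    calc |c*(p^2+p*q+q^2) - s*(p+q) + r|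
        ≤ |c*(p^2+p*q+q^2) - s*(p+q)| + |r| := abs_add_le _ _
      _ ≤ |c*(p^2+p*q+q^2)| + |s*(p+q)| + |r| := by
          linarith [abs_sub (c*(p^2+p*q+q^2)) (s*(p+q))]
      _ = |c| * |p^2+p*q+q^2| + |s| * |p+q| + |r| := by rw [abs_mul, abs_mul]
      _ ≤ |c| *(3*B^2) + |s| *(2*B) + |r| := by
          have t1 := mul_le_mul_of_nonneg_left h1 (abs_nonneg c)
          have t2 := mul_le_mul_of_nonneg_left h2 (abs_nonneg s)
          linarith
      _ = K0 := by rw [hK0def]; ring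
  set K : NNReal := ⟨K0, hK0⟩ with hKdef
  have hglip : LipschitzWith K g := by
    apply LipschitzWith.of_dist_le_mul
    intro u v
    rw [Real.dist_eq, Real.dist_eq]
    have h1 := hfdiff (clamp u) (clamp v)
      (habs _ (hclJ u).1 (hclJ u).2) (habs _ (hclJ v).1 (hclJ v).2)
    have h2 := mul_le_mul_of_nonneg_left (hcl_lip u v) hK0
    calc |g u - g v| ≤ K0 * |clamp u - clamp v| := h1
      _ ≤ K0 * |u - v| := h2
      _ = (K : ℝ) * |u - v| := rfl
  set Cb := |c| *B^3 + |s| *B^2 + |r| *B + 1 with hCbdef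
  have hCb : 0 < Cb := by positivity
  have hgB : ∀ x : ℝ, |g x| ≤ Cb := by
    intro x
    obtain ⟨h1, h2⟩ := hclJ x
    have hx := habs _ h1 h2
    have e1 : |g x| ≤ |c| * |clamp x|^3 + |s| * |clamp x|^2 + |r| * |clamp x| := by
      calc |g x| ≤ |c * clamp x ^3 - s * clamp x ^2| + |r * clamp x| := abs_add_le _ _
        _ ≤ |c * clamp x^3| + |s * clamp x^2| + |r * clamp x| := by
            linarith [abs_sub (c * clamp x^3) (s * clamp x^2)]
        _ = |c| * |clamp x|^3 + |s| * |clamp x|^2 + |r| * |clamp x| := by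
            rw [abs_mul, abs_mul, abs_mul, abs_pow, abs_pow]
    have h3 : |clamp x|^3 ≤ B^3 := pow_le_pow_left₀ (abs_nonneg _) hx 3
    have h4 : |clamp x|^2 ≤ B^2 := pow_le_pow_left₀ (abs_nonneg _) hx 2
    have t1 := mul_le_mul_of_nonneg_left h3 (abs_nonneg c)
    have t2 := mul_le_mul_of_nonneg_left h4 (abs_nonneg s)
    have t3 := mul_le_mul_of_nonneg_left hx (abs_nonneg r)
    rw [hCbdef]; linarith
  -- choose the time step
  set ε := min (1/Cb) Tstar with hεdef
  have hε : 0 < ε := lt_min (by positivity) hTs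
  have hεCb : ε ≤ 1/Cb := min_le_left _ _
  have hεT : ε ≤ Tstar := min_le_right _ _
  set t₂ := Tstar - ε/2 with ht₂def
  set b := Tstar + ε/2 with hbdef
  have ht₂0 : 0 < t₂ := by rw [ht₂def]; linarith
  have ht₂T : t₂ < Tstar := by rw [ht₂def]; linarith
  have hbT : Tstar < b := by rw [hbdef]; linarith
  have hbt₂ : b - t₂ = ε := by rw [hbdef, ht₂def]; ring
  have ht₂b : t₂ < b := by linarith
  have ht₂mem : t₂ ∈ Ico (0:ℝ) Tstar := ⟨ht₂0.le, ht₂T⟩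
  have hCbε : Cb * ε ≤ 1 := by
    calc Cb * ε ≤ Cb * (1/Cb) := mul_le_mul_of_nonneg_left hεCb hCb.le
      _ = 1 := by field_simp
  have hPL : IsPicardLindelof (fun _ x => g x) (⟨t₂, le_refl t₂, ht₂b.le⟩ : Icc t₂ b) (y t₂)
      1 0 ⟨Cb, hCb.le⟩ K := by
    constructor
    · exact fun t _ => hglip.lipschitzOnWith
    · exact fun x _ => continuousOn_const
    · intro t _ x _; rw [Real.norm_eq_abs]; exact hgB x
    · have hmax : max (b - t₂) (t₂ - t₂) = ε := by
        rw [max_eq_left (by linarith), hbt₂]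
      show Cb * max (b - t₂) (t₂ - t₂) ≤ (1:ℝ) - 0
      rw [hmax, sub_zero]; exact hCbε
  obtain ⟨α, hα0, hαd⟩ :=
    IsPicardLindelof.exists_eq_forall_mem_Icc_hasDerivWithinAt₀ hPL
  replace hα0 : α t₂ = y t₂ := hα0
  have hαcont : ContinuousOn α (Icc t₂ b) := fun t ht => (hαd t ht).continuousWithinAt
  have hαDat : ∀ u ∈ Ioo t₂ b, HasDerivAt α (g (α u)) u :=
    fun u hu => (hαd u ⟨hu.1.le, hu.2.le⟩).hasDerivAt (Icc_mem_nhds hu.1 hu.2)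
  -- the approximate solution stays close to its initial value
  have hαb : ∀ t ∈ Icc t₂ b, |α t - y t₂| ≤ Cb * (t - t₂) := by
    have hD1 : ∀ u ∈ Ioo t₂ b, HasDerivAt (fun t => Cb * t - α t) (Cb - g (α u)) u := by
      intro u hu
      exact (((hasDerivAt_id u).const_mul Cb).sub (hαDat u hu)).congr_deriv (by ring)
    have hD2 : ∀ u ∈ Ioo t₂ b, HasDerivAt (fun t => Cb * t + α t) (Cb + g (α u)) u := by
      intro u hu
      exact (((hasDerivAt_id u).const_mul Cb).add (hαDat u hu)).congr_deriv (by ring)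
    have hc1 : ContinuousOn (fun t => Cb * t - α t) (Icc t₂ b) :=
      (continuous_const.mul continuous_id).continuousOn.sub hαcont
    have hc2 : ContinuousOn (fun t => Cb * t + α t) (Icc t₂ b) :=
      (continuous_const.mul continuous_id).continuousOn.add hαcont
    have hm1 : MonotoneOn (fun t => Cb * t - α t) (Icc t₂ b) := by
      apply monotoneOn_of_deriv_nonneg (convex_Icc t₂ b) hc1
      · intro u hu
        rw [interior_Icc] at hu
        exact (hD1 u hu).differentiableAt.differentiableWithinAt
      · intro u hu
        rw [interior_Icc] at hu
        rw [(hD1 u hu).deriv]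
        linarith [(abs_le.1 (hgB (α u))).2]
    have hm2 : MonotoneOn (fun t => Cb * t + α t) (Icc t₂ b) := by
      apply monotoneOn_of_deriv_nonneg (convex_Icc t₂ b) hc2
      · intro u hu
        rw [interior_Icc] at hu
        exact (hD2 u hu).differentiableAt.differentiableWithinAt
      · intro u hu
        rw [interior_Icc] at hu
        rw [(hD2 u hu).deriv]
        linarith [(abs_le.1 (hgB (α u))).1]
    intro t ht
    have ht₂mem' : t₂ ∈ Icc t₂ b := left_mem_Icc.2 ht₂b.le
    have e1 : Cb * t₂ - α t₂ ≤ Cb * t - α t := hm1 ht₂mem' ht ht.1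
    have e2 : Cb * t₂ + α t₂ ≤ Cb * t + α t := hm2 ht₂mem' ht ht.1
    rw [hα0] at e1 e2
    rw [abs_le]
    constructor <;> linarith
  have hαJ : ∀ t ∈ Icc t₂ b, m - 1 ≤ α t ∧ α t ≤ C + 1 := by
    intro t ht
    have h1 := hαb t ht
    have h2 : Cb * (t - t₂) ≤ 1 := by
      have : t - t₂ ≤ ε := by
        have := ht.2; rw [← hbt₂]; linarith
      calc Cb * (t - t₂) ≤ Cb * ε := mul_le_mul_of_nonneg_left this hCb.le
        _ ≤ 1 := hCbε
    have h3 := (abs_le.1 h1).1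
    have h4 := (abs_le.1 h1).2
    have h5 := hlow t₂ ht₂mem
    have h6 := hup t₂ ht₂mem
    constructor <;> linarith
  have hgα : ∀ t ∈ Icc t₂ b, g (α t) = c * α t ^ 3 - s * α t ^ 2 + r * α t := by
    intro t ht
    obtain ⟨h1, h2⟩ := hαJ t ht
    simp only [hgdef]
    rw [hcl_eq _ h1 h2]
  have hyg : ∀ t ∈ Ico (0:ℝ) Tstar, c * y t ^ 3 - s * y t ^ 2 + r * y t = g (y t) := by
    intro t ht
    simp only [hgdef]
    rw [hcl_eq (y t) (by linarith [hlow t ht]) (by linarith [hup t ht])]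
  have hcontY : ContinuousOn y (Ico 0 Tstar) := fun t ht => (hsol t ht).continuousWithinAt
  -- uniqueness on the overlap
  have hEq : ∀ u ∈ Ico t₂ Tstar, y u = α u := by
    intro u hu
    rcases eq_or_lt_of_le hu.1 with he | hlt
    · rw [← he]; exact hα0.symm
    · have huT : u < Tstar := hu.2
      have hsub1 : Icc t₂ u ⊆ Ico 0 Tstar :=
        fun x hx => ⟨ht₂0.le.trans hx.1, lt_of_le_of_lt hx.2 huT⟩
      have hsub2 : Icc t₂ u ⊆ Icc t₂ b :=
        fun x hx => ⟨hx.1, hx.2.trans (by linarith)⟩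
      have hEqOn : EqOn y α (Icc t₂ u) := by
        apply ODE_solution_unique (v := fun _ x => g x) (fun _ => hglip)
          (hcontY.mono hsub1) ?_ (hαcont.mono hsub2) ?_ hα0.symm
        · intro t ht
          have htT : t ∈ Ioo 0 Tstar := ⟨lt_of_lt_of_le ht₂0 ht.1, lt_trans ht.2 huT⟩
          have hD := (hsol t ⟨htT.1.le, htT.2⟩).hasDerivAt (Ico_mem_nhds htT.1 htT.2)
          rw [hyg t ⟨htT.1.le, htT.2⟩] at hD
          exact hD.hasDerivWithinAt
        · intro t ht
          have htb : t ∈ Icc t₂ b := ⟨ht.1, by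
            have := ht.2; have := huT; linarith⟩
          have hmem : Icc t₂ b ∈ nhdsWithin t (Ici t) := by
            apply mem_nhdsWithin.2
            refine ⟨Iio b, isOpen_Iio, ?_, ?_⟩
            · have := ht.2; have := huT; simp only [mem_Iio]; linarith
            · intro x hx; exact ⟨htb.1.trans hx.2, hx.1.le⟩
          exact (hαd t htb).mono_of_mem_nhdsWithin hmem
      exact hEqOn ⟨hu.1, le_refl u⟩
  -- glue
  set z : ℝ → ℝ := fun t => if t < Tstar then y t else α t with hzdef
  have hz_y : ∀ t ∈ Ico (0:ℝ) Tstar, z t = y t := by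
    intro t ht; simp only [hzdef]; rw [if_pos ht.2]
  have hz_α : ∀ t ∈ Ico t₂ b, z t = α t := by
    intro t ht
    by_cases h : t < Tstar
    · simp only [hzdef]; rw [if_pos h]; exact hEq t ⟨ht.1, h⟩
    · simp only [hzdef]; rw [if_neg h]
  refine ⟨b, hbT, z, ?_, ?_, hz_y⟩
  · rw [hz_y 0 h0mem]
  · intro t ht
    by_cases htT : t < Tstar
    · have htmem : t ∈ Ico (0:ℝ) Tstar := ⟨ht.1, htT⟩
      have h2 : HasDerivWithinAt z (c * y t ^ 3 - s * y t ^ 2 + r * y t) (Ico 0 Tstar) t :=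
        (hsol t htmem).congr hz_y (hz_y t htmem)
      rw [hz_y t htmem]
      apply h2.mono_of_mem_nhdsWithin
      apply mem_nhdsWithin.2
      exact ⟨Iio Tstar, isOpen_Iio, htT, fun x hx => ⟨hx.2.1, hx.1⟩⟩
    · push_neg at htT
      have ht₂t : t₂ < t := lt_of_lt_of_le ht₂T htT
      have htb : t ∈ Icc t₂ b := ⟨ht₂t.le, ht.2.le⟩
      have htb' : t ∈ Ico t₂ b := ⟨ht₂t.le, ht.2⟩
      have h1 := (hαd t htb).mono (Ico_subset_Icc_self : Ico t₂ b ⊆ Icc t₂ b)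
      have h2 : HasDerivWithinAt z (g (α t)) (Ico t₂ b) t :=
        h1.congr hz_α (hz_α t htb')
      have h3 : g (α t) = c * z t ^ 3 - s * z t ^ 2 + r * z t := by
        rw [hz_α t htb']; exact hgα t htb
      rw [← h3]
      apply h2.mono_of_mem_nhdsWithin
      apply mem_nhdsWithin.2
      exact ⟨Ioi t₂, isOpen_Ioi, ht₂t, fun x hx => ⟨hx.1.le, hx.2.2⟩⟩

/-- `y` is a (C¹) solution of the cubic approximate lower-estimate ODE
`y′ = (a/k_max)·y³ − (r/k_min + a)·y² + r·y` on the set `D`. -/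
def CubicSolOn (a r kmin kmax : ℝ) (y : ℝ → ℝ) (D : Set ℝ) : Prop :=
  ∀ t ∈ D, HasDerivWithinAt y
    ((a / kmax) * y t ^ 3 - (r / kmin + a) * y t ^ 2 + r * y t) D t

/-- if `x₊` is the larger of the two positive roots of the
quadratic `(a/k_max)·X² − (r/k_min + a)·X + r` and `y(0) > x₊`, then any C¹
solution of `y′ = (a/k_max)·y³ − (r/k_min + a)·y² + r·y` blows up in finite
time: there is no solution on all of `[0, ∞)`, and on the maximal interval of
existence `[0, T*)` one has `T* < ∞` and `y(t) → +∞` as `t → T*⁻`. -/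
theorem cubic_ode_blowup (a r kmin kmax : ℝ)
    (ha : 0 < a) (hr : 0 < r) (hkmin : 0 < kmin) (hk : kmin < kmax)
    (xplus : ℝ) (hpos : 0 < xplus)
    (hroot : (a / kmax) * xplus ^ 2 - (r / kmin + a) * xplus + r = 0)
    (hlargest : ∀ z : ℝ, (a / kmax) * z ^ 2 - (r / kmin + a) * z + r = 0 → z ≤ xplus)
    (y0 : ℝ) (hy0 : xplus < y0) :
    (¬ ∃ y : ℝ → ℝ, y 0 = y0 ∧ CubicSolOn a r kmin kmax y (Set.Ici 0)) ∧
    ∀ (Tstar : ℝ) (y : ℝ → ℝ), 0 < Tstar → y 0 = y0 →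
      CubicSolOn a r kmin kmax y (Set.Ico 0 Tstar) →
      (¬ ∃ b : ℝ, Tstar < b ∧ ∃ z : ℝ → ℝ, z 0 = y0 ∧
          CubicSolOn a r kmin kmax z (Set.Ico 0 b) ∧
          ∀ t ∈ Set.Ico (0:ℝ) Tstar, z t = y t) →
      Filter.Tendsto y (nhdsWithin Tstar (Set.Iio Tstar)) Filter.atTop := by
  have hkmax : 0 < kmax := hkmin.trans hk
  have hc : 0 < a / kmax := by positivity
  have hcne : a / kmax ≠ 0 := ne_of_gt hc
  set xm := (r/kmin + a)/(a/kmax) - xplus with hxmdef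
  have hfac : ∀ x : ℝ, (a/kmax)*x^2 - (r/kmin+a)*x + r = (a/kmax)*(x-xplus)*(x-xm) :=
    cubic_fac hcne hroot hxmdef
  have hxmroot : (a/kmax)*xm^2 - (r/kmin+a)*xm + r = 0 := by rw [hfac xm]; ring
  have hxm : xm ≤ xplus := hlargest xm hxmroot
  obtain ⟨Tb, hTbpos, hno⟩ := no_sol_large_T hc hr hpos hxm hfac y0 hy0
  constructor
  · rintro ⟨y, hy0', hysol⟩
    apply hno (Tb+1) (by linarith) y hy0'
    intro t ht
    exact (hysol t (mem_Ici.mpr ht.1)).mono (fun u hu => mem_Ici.mpr hu.1)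
  · intro Tstar y hTs hy0' hsolD hmax
    have hsol' : ∀ t ∈ Ico 0 Tstar, HasDerivWithinAt y
        ((a/kmax) * y t ^ 3 - (r/kmin+a) * y t ^ 2 + r * y t) (Ico 0 Tstar) t := hsolD
    have hy0gt : xplus < y 0 := by rw [hy0']; exact hy0
    obtain ⟨hgt, hmono⟩ := sol_mono hc hpos hxm hfac hy0gt hsol'
    by_cases hbd : ∃ Cb : ℝ, ∀ t ∈ Ico (0:ℝ) Tstar, y t ≤ Cb
    · exfalso
      apply hmax
      obtain ⟨Cb, hCb⟩ := hbd
      have hlow : ∀ t ∈ Ico (0:ℝ) Tstar, y 0 ≤ y t := by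
        intro t ht
        exact hmono.monotoneOn ⟨le_refl 0, hTs⟩ ht ht.1
      obtain ⟨b, hb, z, hz0, hzsol, hzy⟩ := extend_sol hTs hsol' hlow hCb
      exact ⟨b, hb, z, by rw [hz0, hy0'], hzsol, hzy⟩
    · push_neg at hbd
      rw [tendsto_atTop]
      intro Cst
      obtain ⟨t₀, ht₀, hCt₀⟩ := hbd Cst
      filter_upwards [Ioo_mem_nhdsLT ht₀.2] with u hu
      have hu' : u ∈ Ico (0:ℝ) Tstar := ⟨ht₀.1.trans hu.1.le, hu.2⟩
      exact hCt₀.le.trans (hmono.monotoneOn ht₀ hu' hu.1.le)
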